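/- Let F be a field of characteristic zero and let y₁, y₂, t ∈ F satisfy t³ = (y₁² − 1)(y₂² − 1), with y₁ ≠ 1 and y₁ ≠ −1. Set u = t/(y₁² − 1), X = 2(y₂ + 1)/(y₁ − 1)², and Y = 4(u³(y₁ + 1)(y₁ − 1)² + y₂ + 1)/(y₁ − 1)³. Then Y² = X³ + 4u³X² − 4u³X. (This is the Weierstrass form of Fibration 3, with singular fibers III* + I₆* + 3I₁, on the singular K3 surface X₃.) -/

import Mathlib

set_option maxHeartbeats 1000000 in
/-- Weierstrass form of Fibration 3 (singular fibers `III* + I₆* + 3I₁`) on the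
singular K3 surface `X₃` of discriminant 3, as a purely algebraic identity. -/
theorem fibration3_weierstrass_identity (F : Type*) [Field F] [CharZero F]
    (y₁ y₂ t u X Y : F)
    (ht : t ^ 3 = (y₁ ^ 2 - 1) * (y₂ ^ 2 - 1))
    (hy₁ : y₁ ≠ 1) (hy₁' : y₁ ≠ -1)
    (hu : u = t / (y₁ ^ 2 - 1))
    (hX : X = 2 * (y₂ + 1) / (y₁ - 1) ^ 2)
    (hY : Y = 4 * (u ^ 3 * (y₁ + 1) * (y₁ - 1) ^ 2 + y₂ + 1) / (y₁ - 1) ^ 3) :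
    Y ^ 2 = X ^ 3 + 4 * u ^ 3 * X ^ 2 - 4 * u ^ 3 * X := by
  have h1 : y₁ - 1 ≠ 0 := sub_ne_zero.mpr hy₁
  have h2 : y₁ + 1 ≠ 0 := fun h => hy₁' (by linear_combination h)
  have h3 : y₁ ^ 2 - 1 ≠ 0 := fun h => h1 (by
    rcases mul_eq_zero.mp (show (y₁ - 1) * (y₁ + 1) = 0 by linear_combination h) with h' | h'
    · exact h'
    · exact absurd h' h2)
  have hu3 : u ^ 3 * (y₁ ^ 2 - 1) ^ 2 = y₂ ^ 2 - 1 := by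
    rw [hu, div_pow, div_mul_eq_mul_div, ht]
    rw [div_eq_iff (pow_ne_zero 3 h3)]; ring
  subst hX hY
  field_simp
  linear_combination (8 * (y₂ + 1) + 16 * u ^ 3 * (y₁ - 1) ^ 2) * hu3
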